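/- Let p be a prime and R a commutative ring. Then Ŵ(R) is an ideal of 𝕎 R: it contains 0, is closed under addition and negation, and for every a ∈ 𝕎 R and every x ∈ Ŵ(R) one has a·x ∈ Ŵ(R). -/

import Mathlib

open WittVector

/-- `Ŵ(R)`: the set of Witt vectors all of whose coefficients are nilpotent and all but
finitely many of whose coefficients are zero. -/
def wittHat (p : ℕ) (R : Type*) [CommRing R] : Set (WittVector p R) :=
  {x | (∀ i, IsNilpotent (x.coeff i)) ∧ {i | x.coeff i ≠ 0}.Finite}

namespace WittHatAux

open MvPolynomial Finset

variable {p : ℕ} [hp : Fact p.Prime]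








variable {p : ℕ} [hp : Fact p.Prime]

theorem IsWeightedHomogeneous.neg' {σ R M : Type*} [CommRing R] [AddCommMonoid M]
    {w : σ → M} {φ : MvPolynomial σ R} {m : M} (h : φ.IsWeightedHomogeneous w m) :
    (-φ).IsWeightedHomogeneous w m := by
  intro d hd
  apply h
  simpa using hd

theorem IsWeightedHomogeneous.pow' {σ R M : Type*} [CommRing R] [AddCommMonoid M]
    {w : σ → M} {φ : MvPolynomial σ R} {m : M} (h : φ.IsWeightedHomogeneous w m) (k : ℕ) :
    (φ ^ k).IsWeightedHomogeneous w (k • m) := by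
  have h1 : φ ^ k = ∏ _i ∈ Finset.range k, φ := by simp
  rw [h1]
  have := MvPolynomial.IsWeightedHomogeneous.prod (Finset.range k) (fun _ => φ)
    (fun _ => m) (w := w) (fun i _ => h)
  simpa using this

theorem renamed_witt_homog (b : Fin 2) (w : Fin 2 × ℕ → ℕ) (c : ℕ)
    (hw : ∀ i, w (b, i) = c * p ^ i) (n : ℕ) :
    IsWeightedHomogeneous w (rename (Prod.mk b) (wittPolynomial p ℚ n)) (c * p ^ n) := by
  rw [wittPolynomial, map_sum]
  apply MvPolynomial.IsWeightedHomogeneous.sum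
  intro i hi
  rw [rename_monomial]
  apply isWeightedHomogeneous_monomial
  rw [Finsupp.mapDomain_single, Finsupp.weight_apply, Finsupp.sum_single_index]
  · rw [smul_eq_mul, hw, ← mul_assoc, mul_comm (p ^ (n - i)) c, mul_assoc, ← pow_add]
    congr 2
    have := Finset.mem_range.mp hi
    omega
  · simp

theorem wittStructureRat_homog (Φ : MvPolynomial (Fin 2) ℚ) (w : Fin 2 × ℕ → ℕ)
    (hΦ : ∀ n : ℕ, IsWeightedHomogeneous w
      (bind₁ (fun b => rename (Prod.mk b) (wittPolynomial p ℚ n)) Φ) (p ^ n)) :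
    ∀ n, IsWeightedHomogeneous w (wittStructureRat p Φ n) (p ^ n) := by
  intro n
  induction n using Nat.strong_induction_on with
  | _ n IH =>
    rw [wittStructureRat_rec]
    have hsum : IsWeightedHomogeneous w
        (∑ i ∈ Finset.range n, C ((p : ℚ) ^ i) * wittStructureRat p Φ i ^ p ^ (n - i))
        (p ^ n) := by
      apply MvPolynomial.IsWeightedHomogeneous.sum
      intro i hi
      have hpow := IsWeightedHomogeneous.pow' (IH i (Finset.mem_range.mp hi)) (p ^ (n - i))
      have hmul := (isWeightedHomogeneous_C w ((p : ℚ) ^ i)).mul hpow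
      rw [zero_add] at hmul
      have : p ^ (n - i) • p ^ i = p ^ n := by
        rw [smul_eq_mul, ← pow_add]
        congr 1
        have := Finset.mem_range.mp hi
        omega
      rwa [this] at hmul
    have hsub : IsWeightedHomogeneous w
        (bind₁ (fun b => rename (Prod.mk b) (wittPolynomial p ℚ n)) Φ -
          ∑ i ∈ Finset.range n, C ((p : ℚ) ^ i) * wittStructureRat p Φ i ^ p ^ (n - i))
        (p ^ n) := by
      rw [sub_eq_add_neg]
      exact (hΦ n).add (IsWeightedHomogeneous.neg' hsum)
    have := (isWeightedHomogeneous_C w (1 / (p : ℚ) ^ n)).mul hsub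
    rwa [zero_add] at this

theorem wittStructureInt_homog (Φ : MvPolynomial (Fin 2) ℤ) (w : Fin 2 × ℕ → ℕ)
    (hΦ : ∀ n : ℕ, IsWeightedHomogeneous w
      (bind₁ (fun b => rename (Prod.mk b) (wittPolynomial p ℚ n))
        (map (Int.castRingHom ℚ) Φ)) (p ^ n)) :
    ∀ n, IsWeightedHomogeneous w (wittStructureInt p Φ n) (p ^ n) := by
  intro n d hd
  apply wittStructureRat_homog (map (Int.castRingHom ℚ) Φ) w hΦ n (d := d)
  rw [← map_wittStructureInt, MvPolynomial.coeff_map]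
  simp only [Int.coe_castRingHom, ne_eq, Int.cast_eq_zero]
  exact hd

theorem wittAdd_homog (n : ℕ) :
    IsWeightedHomogeneous (fun v : Fin 2 × ℕ => p ^ v.2) (WittVector.wittAdd p n) (p ^ n) := by
  apply wittStructureInt_homog
  intro k
  rw [map_add, MvPolynomial.map_X, MvPolynomial.map_X, map_add, bind₁_X_right, bind₁_X_right]
  have h0 := renamed_witt_homog (p := p) 0 (fun v : Fin 2 × ℕ => p ^ v.2) 1 (fun i => (one_mul _).symm) k
  have h1 := renamed_witt_homog (p := p) 1 (fun v : Fin 2 × ℕ => p ^ v.2) 1 (fun i => (one_mul _).symm) k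
  rw [one_mul] at h0 h1
  exact h0.add h1

theorem wittMul_homog (n : ℕ) :
    IsWeightedHomogeneous (fun v : Fin 2 × ℕ => (v.1 : ℕ) * p ^ v.2)
      (WittVector.wittMul p n) (p ^ n) := by
  apply wittStructureInt_homog
  intro k
  rw [map_mul, MvPolynomial.map_X, MvPolynomial.map_X, map_mul, bind₁_X_right, bind₁_X_right]
  have h0 := renamed_witt_homog (p := p) 0 (fun v : Fin 2 × ℕ => (v.1 : ℕ) * p ^ v.2) 0
    (fun i => rfl) k
  have h1 := renamed_witt_homog (p := p) 1 (fun v : Fin 2 × ℕ => (v.1 : ℕ) * p ^ v.2) 1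
    (fun i => rfl) k
  have := h0.mul h1
  rwa [zero_mul, zero_add, one_mul] at this





theorem prod_pow_mem_pow {R σ : Type*} [CommRing R] (I : Ideal R) (f : σ → R) (d : σ → ℕ)
    (t : Finset σ) :
    (∀ v ∈ t, f v ∈ I) → (∏ v ∈ t, f v ^ d v) ∈ I ^ (∑ v ∈ t, d v) := by
  classical
  induction t using Finset.induction_on with
  | empty => simp [Ideal.one_eq_top]
  | @insert a s ha ih =>
    intro hf
    rw [Finset.prod_insert ha, Finset.sum_insert ha, pow_add]
    exact Ideal.mul_mem_mul (Ideal.pow_mem_pow (hf a (Finset.mem_insert_self a s)) _)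
      (ih fun v hv => hf v (Finset.mem_insert_of_mem hv))

theorem eval_mem_pow {R σ : Type*} [CommRing R] (I : Ideal R) (f : σ → R)
    (φ : MvPolynomial σ ℤ) (k : ℕ)
    (h : ∀ d ∈ φ.support, (∏ v ∈ d.support, f v ^ d v) ∈ I ^ k) :
    aeval f φ ∈ I ^ k := by
  rw [aeval_def, eval₂_eq]
  exact Ideal.sum_mem _ fun d hd => Ideal.mul_mem_left _ _ (h d hd)

theorem monomial_mem {R σ : Type*} [CommRing R] (I : Ideal R)
    (f : σ → R) (P : σ → Prop) [DecidablePred P] (hf : ∀ v, P v → f v ∈ I)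
    (d : σ →₀ ℕ) (k : ℕ) (hk : k ≤ ∑ v ∈ d.support.filter P, d v) :
    (∏ v ∈ d.support, f v ^ d v) ∈ I ^ k := by
  classical
  have h1 : (∏ v ∈ d.support.filter P, f v ^ d v) ∈ I ^ k := by
    refine SetLike.le_def.mp (Ideal.pow_le_pow_right hk) ?_
    exact prod_pow_mem_pow I f d _ (fun v hv => hf v (Finset.mem_filter.mp hv).2)
  rw [← Finset.prod_filter_mul_prod_filter_not d.support P]
  exact Ideal.mul_mem_right _ _ h1

theorem key_le {σ : Type*} (w : σ → ℕ) (P : σ → Prop) [DecidablePred P] (d : σ →₀ ℕ)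
    (q W k : ℕ) (hw : ∀ v, ¬P v → w v = 0) (hW : ∀ v ∈ d.support, P v → w v ≤ W)
    (hq : Finsupp.weight w d = q) (hkW : k * W ≤ q) (hW0 : 0 < W) :
    k ≤ ∑ v ∈ d.support.filter P, d v := by
  have h1 : q = ∑ v ∈ d.support.filter P, d v * w v := by
    have hsplit := Finset.sum_filter_add_sum_filter_not d.support P (fun v => d v • w v)
    have h0 : ∑ v ∈ d.support.filter (fun v => ¬ P v), d v • w v = 0 :=
      Finset.sum_eq_zero fun v hv => by rw [hw v (Finset.mem_filter.mp hv).2, smul_zero]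
    rw [← hq, Finsupp.weight_apply, Finsupp.sum, ← hsplit, h0, add_zero]
    simp [smul_eq_mul]
  have h2 : q ≤ (∑ v ∈ d.support.filter P, d v) * W := by
    rw [h1, Finset.sum_mul]
    exact Finset.sum_le_sum fun v hv =>
      Nat.mul_le_mul_left _ (hW v (Finset.mem_filter.mp hv).1 (Finset.mem_filter.mp hv).2)
  exact Nat.le_of_mul_le_mul_right (le_trans hkW h2) hW0

theorem weight_term_le {σ : Type*} (w : σ → ℕ) (d : σ →₀ ℕ) {v : σ} (hv : v ∈ d.support) :
    w v ≤ Finsupp.weight w d := by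
  classical
  rw [Finsupp.weight_apply, Finsupp.sum]
  calc w v ≤ d v • w v := by
        have h1 : 1 ≤ d v := Nat.one_le_iff_ne_zero.mpr (Finsupp.mem_support_iff.mp hv)
        rw [smul_eq_mul]
        exact Nat.le_mul_of_pos_left _ h1
    _ ≤ _ := Finset.single_le_sum (f := fun v => d v • w v) (fun _ _ => Nat.zero_le _) hv


theorem master {R : Type*} [CommRing R] (I : Ideal R) (m N : ℕ) (hm : I ^ m ≤ ⊥)
    (w : Fin 2 × ℕ → ℕ) (P : Fin 2 × ℕ → Prop) [DecidablePred P]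
    (φ : MvPolynomial (Fin 2 × ℕ) ℤ) (n : ℕ)
    (hφ : IsWeightedHomogeneous w φ (p ^ n))
    (f : Fin 2 × ℕ → R)
    (hfI : ∀ v, P v → f v ∈ I)
    (hf0 : ∀ v, P v → N ≤ v.2 → f v = 0)
    (hw0 : ∀ v, ¬P v → w v = 0)
    (hwP : ∀ v, P v → w v = p ^ v.2) :
    aeval f φ ∈ I ∧ (N + m ≤ n → aeval f φ = 0) := by
  have hp1 : 1 < p := hp.out.one_lt
  constructor
  · have h1 : aeval f φ ∈ I ^ 1 := by
      apply eval_mem_pow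
      intro d hd
      apply monomial_mem I f P hfI d 1
      have hwd : Finsupp.weight w d = p ^ n := hφ (mem_support_iff.mp hd)
      apply key_le w P d (p ^ n) (p ^ n) 1 hw0 ?_ hwd (by omega) (by positivity)
      intro v hv _
      rw [← hwd]
      exact weight_term_le w d hv
    simpa using h1
  · intro hn
    have h2 : aeval f φ ∈ I ^ m := by
      apply eval_mem_pow
      intro d hd
      by_cases hz : ∃ v ∈ d.support, P v ∧ N ≤ v.2
      · obtain ⟨v, hv, hPv, hNv⟩ := hz
        have hzero : f v ^ d v = 0 := by
          rw [hf0 v hPv hNv, zero_pow (Finsupp.mem_support_iff.mp hv)]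
        rw [Finset.prod_eq_zero hv hzero]
        exact zero_mem _
      · push_neg at hz
        apply monomial_mem I f P hfI d m
        have hwd : Finsupp.weight w d = p ^ n := hφ (mem_support_iff.mp hd)
        apply key_le w P d (p ^ n) (p ^ (N - 1)) m hw0 ?_ hwd ?_ (by positivity)
        · intro v hv hPv
          rw [hwP v hPv]
          exact Nat.pow_le_pow_right (by omega) (by have := hz v hv hPv; omega)
        · have hmlt : m < p ^ m := Nat.lt_pow_self hp1
          calc m * p ^ (N - 1) ≤ p ^ (n - (N - 1)) * p ^ (N - 1) := by
                apply Nat.mul_le_mul_right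
                exact le_trans (le_of_lt hmlt) (Nat.pow_le_pow_right (by omega) (by omega))
            _ = p ^ n := by rw [← pow_add]; congr 1; omega
    have := hm h2
    simpa using this


theorem mul_mem_hat {R : Type*} [CommRing R] (a x : WittVector p R)
    (hnil : ∀ i, IsNilpotent (x.coeff i)) (hfin : {i | x.coeff i ≠ 0}.Finite) :
    (∀ i, IsNilpotent ((a * x).coeff i)) ∧ {i | (a * x).coeff i ≠ 0}.Finite := by
  classical
  set I : Ideal R := Ideal.span (Set.range x.coeff) with hI
  have hrange : (Set.range x.coeff).Finite := by
    apply Set.Finite.subset ((hfin.image x.coeff).insert 0)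
    rintro _ ⟨i, rfl⟩
    by_cases h : x.coeff i = 0
    · rw [h]; exact Set.mem_insert _ _
    · exact Set.mem_insert_of_mem _ ⟨i, h, rfl⟩
  have hfg : I.FG := Submodule.fg_span hrange
  have hrad : I ≤ Ideal.radical ⊥ := by
    rw [Ideal.span_le]
    rintro _ ⟨i, rfl⟩
    exact mem_nilradical.mpr (hnil i)
  obtain ⟨m, hm⟩ := Ideal.exists_pow_le_of_le_radical_of_fg hrad hfg
  set N : ℕ := hfin.toFinset.sup id + 1 with hN
  have hbound : ∀ i, N ≤ i → x.coeff i = 0 := by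
    intro i hi
    by_contra h
    have h1 : i ∈ hfin.toFinset := hfin.mem_toFinset.mpr h
    have := Finset.le_sup (f := id) h1
    simp only [id] at this
    omega
  have hmain : ∀ n, (a * x).coeff n ∈ I ∧ (N + m ≤ n → (a * x).coeff n = 0) := by
    intro n
    rw [WittVector.mul_coeff]
    unfold WittVector.peval
    refine master I m N hm (fun v => (v.1 : ℕ) * p ^ v.2) (fun v => v.1 = 1)
      (WittVector.wittMul p n) n (wittMul_homog n) _ ?_ ?_ ?_ ?_
    · rintro ⟨b, i⟩ hb
      dsimp only at hb
      subst hb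
      have h2 : Function.uncurry ![a.coeff, x.coeff] (1, i) = x.coeff i := by
        simp [Function.uncurry]
      rw [h2]
      exact Ideal.subset_span ⟨i, rfl⟩
    · rintro ⟨b, i⟩ hb hi
      dsimp only at hb hi
      subst hb
      have h2 : Function.uncurry ![a.coeff, x.coeff] (1, i) = x.coeff i := by
        simp [Function.uncurry]
      rw [h2]
      exact hbound i hi
    · rintro ⟨b, i⟩ hb
      dsimp only at hb ⊢
      have hb' : (b : ℕ) ≠ 1 := fun h => hb (Fin.ext (by simp [h]))
      have hlt := b.isLt
      have hb0 : (b : ℕ) = 0 := by omega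
      simp [hb0]
    · rintro ⟨b, i⟩ hb
      dsimp only at hb ⊢
      subst hb
      simp
  constructor
  · intro i
    refine ⟨m, ?_⟩
    have h3 := Ideal.pow_mem_pow (hmain i).1 m
    have h4 := hm h3
    simpa using h4
  · apply Set.Finite.subset (Set.finite_Iio (N + m))
    intro n hn
    simp only [Set.mem_setOf_eq] at hn
    simp only [Set.mem_Iio]
    by_contra h
    exact hn ((hmain n).2 (by omega))

theorem add_mem_hat {R : Type*} [CommRing R] (x y : WittVector p R)
    (hnilx : ∀ i, IsNilpotent (x.coeff i)) (hfinx : {i | x.coeff i ≠ 0}.Finite)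
    (hnily : ∀ i, IsNilpotent (y.coeff i)) (hfiny : {i | y.coeff i ≠ 0}.Finite) :
    (∀ i, IsNilpotent ((x + y).coeff i)) ∧ {i | (x + y).coeff i ≠ 0}.Finite := by
  classical
  set I : Ideal R := Ideal.span (Set.range x.coeff ∪ Set.range y.coeff) with hI
  have hrange : (Set.range x.coeff ∪ Set.range y.coeff).Finite := by
    apply Set.Finite.union
    · apply Set.Finite.subset ((hfinx.image x.coeff).insert 0)
      rintro _ ⟨i, rfl⟩
      by_cases h : x.coeff i = 0
      · rw [h]; exact Set.mem_insert _ _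
      · exact Set.mem_insert_of_mem _ ⟨i, h, rfl⟩
    · apply Set.Finite.subset ((hfiny.image y.coeff).insert 0)
      rintro _ ⟨i, rfl⟩
      by_cases h : y.coeff i = 0
      · rw [h]; exact Set.mem_insert _ _
      · exact Set.mem_insert_of_mem _ ⟨i, h, rfl⟩
  have hfg : I.FG := Submodule.fg_span hrange
  have hrad : I ≤ Ideal.radical ⊥ := by
    rw [Ideal.span_le]
    rintro r hr
    rcases hr with ⟨i, rfl⟩ | ⟨i, rfl⟩
    · exact mem_nilradical.mpr (hnilx i)
    · exact mem_nilradical.mpr (hnily i)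
  obtain ⟨m, hm⟩ := Ideal.exists_pow_le_of_le_radical_of_fg hrad hfg
  set N : ℕ := max (hfinx.toFinset.sup id) (hfiny.toFinset.sup id) + 1 with hN
  have hboundx : ∀ i, N ≤ i → x.coeff i = 0 := by
    intro i hi
    by_contra h
    have h1 : i ∈ hfinx.toFinset := hfinx.mem_toFinset.mpr h
    have := Finset.le_sup (f := id) h1
    simp only [id] at this
    omega
  have hboundy : ∀ i, N ≤ i → y.coeff i = 0 := by
    intro i hi
    by_contra h
    have h1 : i ∈ hfiny.toFinset := hfiny.mem_toFinset.mpr h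
    have := Finset.le_sup (f := id) h1
    simp only [id] at this
    omega
  have hmain : ∀ n, (x + y).coeff n ∈ I ∧ (N + m ≤ n → (x + y).coeff n = 0) := by
    intro n
    rw [WittVector.add_coeff]
    unfold WittVector.peval
    refine master I m N hm (fun v => p ^ v.2) (fun _ => True)
      (WittVector.wittAdd p n) n (wittAdd_homog n) _ ?_ ?_ ?_ ?_
    · rintro ⟨b, i⟩ -
      fin_cases b
      · show Function.uncurry ![x.coeff, y.coeff] (0, i) ∈ I
        have h2 : Function.uncurry ![x.coeff, y.coeff] (0, i) = x.coeff i := by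
          simp [Function.uncurry]
        rw [h2]
        exact Ideal.subset_span (Or.inl ⟨i, rfl⟩)
      · show Function.uncurry ![x.coeff, y.coeff] (1, i) ∈ I
        have h2 : Function.uncurry ![x.coeff, y.coeff] (1, i) = y.coeff i := by
          simp [Function.uncurry]
        rw [h2]
        exact Ideal.subset_span (Or.inr ⟨i, rfl⟩)
    · rintro ⟨b, i⟩ - hi
      dsimp only at hi
      fin_cases b
      · show Function.uncurry ![x.coeff, y.coeff] (0, i) = 0
        have h2 : Function.uncurry ![x.coeff, y.coeff] (0, i) = x.coeff i := by
          simp [Function.uncurry]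
        rw [h2]
        exact hboundx i hi
      · show Function.uncurry ![x.coeff, y.coeff] (1, i) = 0
        have h2 : Function.uncurry ![x.coeff, y.coeff] (1, i) = y.coeff i := by
          simp [Function.uncurry]
        rw [h2]
        exact hboundy i hi
    · intro v hv
      exact absurd trivial hv
    · intro v _
      rfl
  constructor
  · intro i
    refine ⟨m, ?_⟩
    have h3 := Ideal.pow_mem_pow (hmain i).1 m
    have h4 := hm h3
    simpa using h4
  · apply Set.Finite.subset (Set.finite_Iio (N + m))
    intro n hn
    simp only [Set.mem_setOf_eq] at hn
    simp only [Set.mem_Iio]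
    by_contra h
    exact hn ((hmain n).2 (by omega))

end WittHatAux

/-- `Ŵ(R)` is an ideal of `𝕎 R`: it contains `0`, is closed under addition and negation,
and is closed under multiplication by arbitrary elements of `𝕎 R`. -/
theorem wittHat_isIdeal (p : ℕ) [Fact p.Prime] (R : Type*) [CommRing R] :
    (0 : WittVector p R) ∈ wittHat p R ∧
    (∀ x y : WittVector p R, x ∈ wittHat p R → y ∈ wittHat p R → x + y ∈ wittHat p R) ∧
    (∀ x : WittVector p R, x ∈ wittHat p R → -x ∈ wittHat p R) ∧
    (∀ a x : WittVector p R, x ∈ wittHat p R → a * x ∈ wittHat p R) := by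
  have hmul : ∀ a x : WittVector p R, x ∈ wittHat p R → a * x ∈ wittHat p R := fun a x hx =>
    WittHatAux.mul_mem_hat a x hx.1 hx.2
  refine ⟨?_, ?_, ?_, hmul⟩
  · constructor
    · intro i
      rw [WittVector.zero_coeff]
      exact IsNilpotent.zero
    · apply Set.Finite.subset Set.finite_empty
      intro i hi
      simp only [Set.mem_setOf_eq, WittVector.zero_coeff, ne_eq, not_true_eq_false] at hi
  · intro x y hx hy
    exact WittHatAux.add_mem_hat x y hx.1 hx.2 hy.1 hy.2
  · intro x hx
    have := hmul (-1) x hx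
    rwa [neg_one_mul] at this
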